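/- Let P, Q : ℝ² → ℝ be continuously differentiable and everywhere positive, and set K(x,y) = log(Q(x,y)/P(x,y)). If y : J → ℝ is a differentiable function on an open interval J satisfying y'(x) = Q(x,y(x))/P(x,y(x)) for all x ∈ J, then y is twice differentiable on J and satisfies the second-order equation y''(x) = K_y(x,y(x))·(y'(x))² + K_x(x,y(x))·y'(x) for all x ∈ J. -/

import Mathlib

/-- If `y' = Q(x,y)/P(x,y)` with `P, Q` continuously differentiable and
positive, and `K = log(Q/P)`, then `y'' = K_y·(y')² + K_x·y'`. -/
theorem stmt_1 (P Q : ℝ × ℝ → ℝ) (hP : ContDiff ℝ 1 P) (hQ : ContDiff ℝ 1 Q)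
    (hPpos : ∀ p, 0 < P p) (hQpos : ∀ p, 0 < Q p)
    (K : ℝ × ℝ → ℝ) (hK : ∀ p, K p = Real.log (Q p / P p))
    (J : Set ℝ) (hJ : IsOpen J) (hJconn : IsPreconnected J)
    (y : ℝ → ℝ)
    (hy : ∀ x ∈ J, HasDerivAt y (Q (x, y x) / P (x, y x)) x) :
    ∀ x ∈ J, ∃ y2 : ℝ,
      HasDerivAt (deriv y) y2 x ∧
      y2 = fderiv ℝ K (x, y x) (0, 1) * (deriv y x) ^ 2
            + fderiv ℝ K (x, y x) (1, 0) * deriv y x := by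
  set F : ℝ × ℝ → ℝ := fun p => Q p / P p with hF
  have hFc : ContDiff ℝ 1 F := hQ.div hP (fun p => (hPpos p).ne')
  have hFpos : ∀ p, 0 < F p := fun p => div_pos (hQpos p) (hPpos p)
  intro x hx
  set p : ℝ × ℝ := (x, y x) with hp
  have hFd : HasFDerivAt F (fderiv ℝ F p) p :=
    (hFc.differentiable one_ne_zero p).hasFDerivAt
  -- derivative of x ↦ F (x, y x)
  have hcurve : HasDerivAt (fun t => (t, y t)) ((1 : ℝ), F p) x :=
    HasDerivAt.prodMk (hasDerivAt_id x) (hy x hx)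
  have hcomp : HasDerivAt (fun t => F (t, y t)) (fderiv ℝ F p (1, F p)) x :=
    by have := hFd.comp_hasDerivAt x hcurve; exact this
  -- deriv y agrees with F (·, y ·) near x
  have heq : deriv y =ᶠ[nhds x] fun t => F (t, y t) := by
    filter_upwards [hJ.mem_nhds hx] with z hz
    exact (hy z hz).deriv
  have hdy : deriv y x = F p := (hy x hx).deriv
  have hy2 : HasDerivAt (deriv y) (fderiv ℝ F p (1, F p)) x :=
    hcomp.congr_of_eventuallyEq heq
  refine ⟨_, hy2, ?_⟩
  -- fderiv K = (F p)⁻¹ • fderiv F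
  have hKeq : K = fun q => Real.log (F q) := funext hK
  have hKd : HasFDerivAt K ((F p)⁻¹ • fderiv ℝ F p) p := by
    rw [hKeq]
    exact (Real.hasDerivAt_log (hFpos p).ne').comp_hasFDerivAt p hFd
  have hfK : fderiv ℝ K p = (F p)⁻¹ • fderiv ℝ F p := hKd.fderiv
  rw [hdy, hfK]
  simp only [ContinuousLinearMap.smul_apply, smul_eq_mul]
  have h10 : ((1 : ℝ), F p) = ((1 : ℝ), 0) + (0, F p) := by simp
  have hlin : fderiv ℝ F p (1, F p)
      = fderiv ℝ F p (1, 0) + F p * fderiv ℝ F p (0, 1) := by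
    rw [h10, map_add]
    congr 1
    have : ((0 : ℝ), F p) = F p • ((0 : ℝ), 1) := by simp
    rw [this, map_smul, smul_eq_mul]
  rw [hlin]
  have hFne : F p ≠ 0 := (hFpos p).ne'
  field_simp
  ring
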